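/- Let p be prime and m > 7. Consider the matrix D_m over F_p with entries binomial(i+1+j, j) - 1 mod p, indexed by p^{m-3} - p(p^3-1)p^{m-7} ≤ i < p^{m-3} and 0 ≤ j < p^{m-7}. Then the number of entries of D_m equal to p-1 (i.e., entries where binomial(i+1+j,j) ≡ 0 mod p) equals p(p^3-1)p^{m-7} · p^{m-7} · (1 - ((p+1)/(2p))^{m-7}). -/

import Mathlib

open Finset

lemma nodvd_iff {p : ℕ} (hp : p.Prime) :
    ∀ t n j, j < p ^ t →
      (¬ p ∣ (n + j).choose j ↔ ∀ k < t, n / p ^ k % p + j / p ^ k % p < p) := by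
  haveI : Fact p.Prime := ⟨hp⟩
  intro t
  induction t with
  | zero =>
    intro n j hj
    simp only [pow_zero, Nat.lt_one_iff] at hj
    subst hj
    simp [hp.one_lt.ne']
  | succ t ih =>
    intro n j hj
    have hp0 : 0 < p := hp.pos
    have lucas := (Choose.choose_modEq_choose_mod_mul_choose_div_nat
      (n := n + j) (k := j) (p := p))
    have hdvd : p ∣ (n + j).choose j ↔
        p ∣ ((n + j) % p).choose (j % p) * ((n + j) / p).choose (j / p) := by
      constructor
      · intro h
        exact (Nat.modEq_zero_iff_dvd.mp ((lucas.symm.trans (Nat.modEq_zero_iff_dvd.mpr h))))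
      · intro h
        exact (Nat.modEq_zero_iff_dvd.mp ((lucas.trans (Nat.modEq_zero_iff_dvd.mpr h))))
    have hjdiv : j / p < p ^ t := by
      rw [Nat.div_lt_iff_lt_mul hp0]
      calc j < p ^ (t + 1) := hj
      _ = p ^ t * p := by ring
    by_cases hcase : n % p + j % p < p
    · have hmod : (n + j) % p = n % p + j % p := by
        rw [Nat.add_mod]
        exact Nat.mod_eq_of_lt hcase
      have hdiv : (n + j) / p = n / p + j / p := by
        rw [Nat.add_div hp0]
        simp [Nat.not_le.mpr hcase]
      have hbase : ¬ p ∣ ((n + j) % p).choose (j % p) := by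
        rw [hmod]
        intro hdd
        have h1 : (n % p + j % p).choose (j % p) ∣ (n % p + j % p).factorial :=
          ⟨(j % p).factorial * (n % p + j % p - j % p).factorial, by
            rw [← mul_assoc, Nat.choose_mul_factorial_mul_factorial (by omega)]⟩
        have h2 : p ∣ (n % p + j % p).factorial := hdd.trans h1
        exact absurd ((Nat.Prime.dvd_factorial hp).mp h2) (by omega)
      have key : ¬ p ∣ (n + j).choose j ↔ ¬ p ∣ ((n + j) / p).choose (j / p) := by
        rw [hdvd, hp.dvd_mul]
        tauto
      rw [key, hdiv, ih (n / p) (j / p) hjdiv]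
      constructor
      · intro h k hk
        cases k with
        | zero => simpa using hcase
        | succ k =>
          have := h k (by omega)
          simpa [pow_succ', Nat.div_div_eq_div_mul] using this
      · intro h k hk
        have := h (k + 1) (by omega)
        simpa [pow_succ', Nat.div_div_eq_div_mul] using this
    · have hmod : (n + j) % p < j % p := by
        have h1 : j % p < p := Nat.mod_lt _ hp0
        have h2 : n % p < p := Nat.mod_lt _ hp0
        have : (n + j) % p = n % p + j % p - p := by
          rw [Nat.add_mod]
          rw [Nat.mod_eq_sub_mod (by omega)]
          exact Nat.mod_eq_of_lt (by omega)
        omega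
      have hzero : ((n + j) % p).choose (j % p) = 0 := Nat.choose_eq_zero_of_lt hmod
      have : p ∣ (n + j).choose j := by
        rw [hdvd, hzero, zero_mul]
        exact dvd_zero p
      constructor
      · intro h; exact absurd this h
      · intro h
        exfalso
        have := h 0 (by omega)
        simp only [pow_zero, Nat.div_one] at this
        omega

lemma card_filter_product {S T : Finset ℕ} (P : ℕ → ℕ → Prop)
    [DecidablePred fun ij : ℕ × ℕ => P ij.1 ij.2] [∀ i, DecidablePred (P i)] :
    ((S ×ˢ T).filter fun ij => P ij.1 ij.2).card = ∑ i ∈ S, (T.filter (P i)).card := by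
  rw [Finset.card_eq_sum_card_fiberwise (f := Prod.fst) (t := S)
    (fun x hx => (Finset.mem_product.mp (Finset.mem_filter.mp hx).1).1)]
  refine Finset.sum_congr rfl fun i hi => ?_
  apply Finset.card_bij (fun ij _ => ij.2)
  · intro ij hij
    simp only [Finset.mem_filter, Finset.mem_product] at hij ⊢
    obtain ⟨⟨⟨_, h2⟩, h3⟩, h4⟩ := hij
    exact ⟨h2, h4 ▸ h3⟩
  · intro a ha b hb hab
    simp only [Finset.mem_filter, Finset.mem_product] at ha hb
    ext
    · rw [ha.2, hb.2]
    · exact hab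
  · intro j hj
    simp only [Finset.mem_filter] at hj
    exact ⟨(i, j), by simp [Finset.mem_filter, Finset.mem_product, hi, hj.1, hj.2], rfl⟩

lemma sum_Ico_periodic {g : ℕ → ℕ} {T : ℕ} (hT : 0 < T) (hg : ∀ n, g (n + T) = g n) :
    ∀ s, ∑ n ∈ Finset.Ico s (s + T), g n = ∑ r ∈ Finset.range T, g r := by
  intro s
  induction s with
  | zero => rw [Nat.zero_add, Finset.range_eq_Ico]
  | succ s ih =>
    have h1 : ∑ n ∈ Finset.Ico (s + 1) (s + 1 + T), g n
        = (∑ n ∈ Finset.Ico (s + 1) (s + T), g n) + g (s + T) := by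
      have : s + 1 + T = (s + T) + 1 := by omega
      rw [this, Finset.sum_Ico_succ_top (by omega)]
    have h2 : ∑ n ∈ Finset.Ico s (s + T), g n
        = g s + ∑ n ∈ Finset.Ico (s + 1) (s + T), g n :=
      Finset.sum_eq_sum_Ico_succ_bot (by omega) g
    rw [h1, hg s]
    omega

lemma sum_Ico_periodic_mul {g : ℕ → ℕ} {T : ℕ} (hT : 0 < T) (hg : ∀ n, g (n + T) = g n) :
    ∀ c s, ∑ n ∈ Finset.Ico s (s + c * T), g n = c * ∑ r ∈ Finset.range T, g r := by
  intro c
  induction c with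
  | zero => simp
  | succ c ih =>
    intro s
    have hsplit : s + (c + 1) * T = (s + c * T) + T := by ring
    rw [hsplit, ← Finset.sum_Ico_consecutive g (by omega) (by omega : s + c * T ≤ s + c * T + T),
      ih s, sum_Ico_periodic hT hg (s + c * T)]
    ring

lemma cond_succ {p : ℕ} (t r j : ℕ) :
    (∀ k < t + 1, r / p ^ k % p + j / p ^ k % p < p) ↔
      (r % p + j % p < p ∧ ∀ k < t, (r / p) / p ^ k % p + (j / p) / p ^ k % p < p) := by
  constructor
  · intro h
    refine ⟨by simpa using h 0 (by omega), fun k hk => ?_⟩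
    have := h (k + 1) (by omega)
    simpa [pow_succ', Nat.div_div_eq_div_mul] using this
  · rintro ⟨h0, h⟩ k hk
    cases k with
    | zero => simpa using h0
    | succ k =>
      have := h k (by omega)
      simpa [pow_succ', Nat.div_div_eq_div_mul] using this

lemma pair_count {p : ℕ} (hp : 0 < p) :
    ∀ t, (((Finset.range (p ^ t)) ×ˢ (Finset.range (p ^ t))).filter
        fun rj => ∀ k < t, rj.1 / p ^ k % p + rj.2 / p ^ k % p < p).card
      = (((Finset.range p) ×ˢ (Finset.range p)).filter fun ab => ab.1 + ab.2 < p).card ^ t := by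
  intro t
  induction t with
  | zero => simp
  | succ t ih =>
    have key : (((Finset.range (p ^ (t + 1))) ×ˢ (Finset.range (p ^ (t + 1)))).filter
        fun rj => ∀ k < t + 1, rj.1 / p ^ k % p + rj.2 / p ^ k % p < p).card
      = ((((Finset.range p) ×ˢ (Finset.range p)).filter fun ab => ab.1 + ab.2 < p) ×ˢ
         (((Finset.range (p ^ t)) ×ˢ (Finset.range (p ^ t))).filter
            fun rj => ∀ k < t, rj.1 / p ^ k % p + rj.2 / p ^ k % p < p)).card := by
      apply Finset.card_bij (fun rj _ => ((rj.1 % p, rj.2 % p), (rj.1 / p, rj.2 / p)))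
      · rintro ⟨r, j⟩ hrj
        simp only [Finset.mem_filter, Finset.mem_product, Finset.mem_range] at hrj ⊢
        obtain ⟨⟨hr, hj⟩, hc⟩ := hrj
        rw [cond_succ] at hc
        refine ⟨⟨⟨Nat.mod_lt _ hp, Nat.mod_lt _ hp⟩, hc.1⟩,
          ⟨Nat.div_lt_of_lt_mul (by rw [mul_comm, ← pow_succ]; exact hr),
           Nat.div_lt_of_lt_mul (by rw [mul_comm, ← pow_succ]; exact hj)⟩, hc.2⟩
      · rintro ⟨r, j⟩ _ ⟨r', j'⟩ _ h
        simp only [Prod.mk.injEq] at h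
        obtain ⟨⟨h1, h2⟩, h3, h4⟩ := h
        have e1 := Nat.div_add_mod r p
        have e2 := Nat.div_add_mod r' p
        have e3 := Nat.div_add_mod j p
        have e4 := Nat.div_add_mod j' p
        rw [h1, h3] at e1
        rw [h2, h4] at e3
        have hr : r = r' := by omega
        have hj : j = j' := by omega
        rw [hr, hj]
      · rintro ⟨⟨a, b⟩, ⟨r', j'⟩⟩ h
        simp only [Finset.mem_filter, Finset.mem_product, Finset.mem_range] at h
        obtain ⟨⟨⟨ha, hb⟩, hab⟩, ⟨⟨hr', hj'⟩, hc⟩⟩ := h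
        refine ⟨(a + p * r', b + p * j'), ?_, ?_⟩
        · simp only [Finset.mem_filter, Finset.mem_product, Finset.mem_range]
          have hm1 : p * r' + p ≤ p * p ^ t := by
            rw [← Nat.mul_succ]; exact Nat.mul_le_mul_left p (by omega)
          have hm2 : p * j' + p ≤ p * p ^ t := by
            rw [← Nat.mul_succ]; exact Nat.mul_le_mul_left p (by omega)
          have h1 : a + p * r' < p ^ (t + 1) := by rw [pow_succ, mul_comm (p ^ t) p]; omega
          have h2 : b + p * j' < p ^ (t + 1) := by rw [pow_succ, mul_comm (p ^ t) p]; omega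
          refine ⟨⟨h1, h2⟩, ?_⟩
          rw [cond_succ]
          constructor
          · rw [Nat.add_mul_mod_self_left, Nat.add_mul_mod_self_left,
              Nat.mod_eq_of_lt ha, Nat.mod_eq_of_lt hb]
            exact hab
          · rw [Nat.add_mul_div_left _ _ hp, Nat.add_mul_div_left _ _ hp,
              Nat.div_eq_of_lt ha, Nat.div_eq_of_lt hb]
            simpa using hc
        · simp only [Prod.mk.injEq]
          refine ⟨⟨?_, ?_⟩, ?_, ?_⟩
          · rw [Nat.add_mul_mod_self_left, Nat.mod_eq_of_lt ha]
          · rw [Nat.add_mul_mod_self_left, Nat.mod_eq_of_lt hb]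
          · rw [Nat.add_mul_div_left _ _ hp, Nat.div_eq_of_lt ha]; simp
          · rw [Nat.add_mul_div_left _ _ hp, Nat.div_eq_of_lt hb]; simp
    rw [key, Finset.card_product, ih, pow_succ]
    ring

lemma base_count {p : ℕ} :
    2 * (((Finset.range p) ×ˢ (Finset.range p)).filter fun ab => ab.1 + ab.2 < p).card
      = p * (p + 1) := by
  rw [card_filter_product (P := fun a b => a + b < p)]
  have h1 : ∀ a ∈ Finset.range p, ((Finset.range p).filter fun b => a + b < p).card = p - a := by
    intro a ha
    rw [Finset.mem_range] at ha
    have : (Finset.range p).filter (fun b => a + b < p) = Finset.range (p - a) := by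
      ext b; simp only [Finset.mem_filter, Finset.mem_range]; omega
    rw [this, Finset.card_range]
  rw [Finset.sum_congr rfl h1]
  have h2 : ∑ a ∈ Finset.range p, (p - a) = ∑ a ∈ Finset.range p, (a + 1) := by
    rw [← Finset.sum_range_reflect]
    apply Finset.sum_congr rfl
    intro a ha
    rw [Finset.mem_range] at ha
    omega
  rw [h2, Finset.sum_add_distrib, Finset.sum_const, Finset.card_range, smul_eq_mul, mul_one]
  have h3 : (∑ a ∈ Finset.range p, a) * 2 = p * (p - 1) := Finset.sum_range_id_mul_two p
  cases p with
  | zero => simp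
  | succ q =>
    have h4 : (q + 1) * (q + 1 - 1) = (q + 1) * q := by norm_num
    have h5 : (q + 1) * (q + 1 + 1) = (q + 1) * q + 2 * (q + 1) := by ring
    omega

lemma digit_periodic {p : ℕ} (hp : 0 < p) (t n k : ℕ) (hk : k < t) :
    (n + p ^ t) / p ^ k % p = n / p ^ k % p := by
  obtain ⟨s, hs⟩ : ∃ s, t = k + s + 1 := ⟨t - k - 1, by omega⟩
  subst hs
  have hpow : p ^ (k + s + 1) = p ^ k * (p ^ s * p) := by ring
  rw [hpow, Nat.add_mul_div_left _ _ (pow_pos hp k), Nat.add_mul_mod_self_right]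

theorem count_zero_entries_D_m (p m : ℕ) (hp : p.Prime) (hm : 7 < m) :
    ((((Finset.Ico (p ^ (m - 3) - p * (p ^ 3 - 1) * p ^ (m - 7)) (p ^ (m - 3))) ×ˢ
        Finset.range (p ^ (m - 7))).filter
          (fun ij => p ∣ (ij.1 + 1 + ij.2).choose ij.2)).card : ℝ)
      = (p * (p ^ 3 - 1) * p ^ (m - 7) : ℕ) * (p ^ (m - 7) : ℕ) *
          (1 - ((p + 1 : ℝ) / (2 * p)) ^ (m - 7)) := by
  have hp0 : 0 < p := hp.pos
  set t := m - 7 with ht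
  have hm3 : m - 3 = t + 4 := by omega
  set q := p ^ 3 - 1 with hq
  -- the interval
  have hC : p * q * p ^ t = p ^ (t + 4) - p ^ (t + 1) := by
    have h3 : 1 ≤ p ^ 3 := Nat.one_le_pow _ _ hp0
    have e1 : p * p ^ 3 * p ^ t = p ^ (t + 4) := by ring
    have e2 : p * 1 * p ^ t = p ^ (t + 1) := by ring
    rw [hq, Nat.mul_sub, Nat.sub_mul, e1, e2]
  have hle : p ^ (t + 1) ≤ p ^ (t + 4) := Nat.pow_le_pow_right hp0 (by omega)
  have ha : p ^ (m - 3) - p * q * p ^ t = p ^ (t + 1) := by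
    rw [hm3, hC, Nat.sub_sub_self hle]
  have hlen : p ^ (t + 4) - p ^ (t + 1) = (p * q) * p ^ t := hC.symm
  set A := (((Finset.range p) ×ˢ (Finset.range p)).filter fun ab => ab.1 + ab.2 < p).card with hA
  set g : ℕ → ℕ := fun n =>
    ((Finset.range (p ^ t)).filter fun j => ∀ k < t, n / p ^ k % p + j / p ^ k % p < p).card
    with hg
  have hgper : ∀ n, g (n + p ^ t) = g n := by
    intro n
    simp only [hg]
    congr 1
    apply Finset.filter_congr
    intro j _
    constructor
    · intro h k hk
      have := h k hk
      rwa [digit_periodic hp0 t n k hk] at this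
    · intro h k hk
      rw [digit_periodic hp0 t n k hk]
      exact h k hk
  -- count of non-divisible entries
  have hnondvd : (((Finset.Ico (p ^ (t + 1)) (p ^ (t + 4))) ×ˢ Finset.range (p ^ t)).filter
      (fun ij => ¬ p ∣ (ij.1 + 1 + ij.2).choose ij.2)).card = (p * q) * A ^ t := by
    rw [card_filter_product (P := fun i j => ¬ p ∣ (i + 1 + j).choose j)]
    have hfib : ∀ i ∈ Finset.Ico (p ^ (t + 1)) (p ^ (t + 4)),
        ((Finset.range (p ^ t)).filter fun j => ¬ p ∣ (i + 1 + j).choose j).card = g (i + 1) := by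
      intro i _
      simp only [hg]
      congr 1
      apply Finset.filter_congr
      intro j hj
      rw [Finset.mem_range] at hj
      have := nodvd_iff hp t (i + 1) j hj
      simp only [this]
    rw [Finset.sum_congr rfl hfib]
    have hshift : ∑ i ∈ Finset.Ico (p ^ (t + 1)) (p ^ (t + 4)), g (i + 1)
        = ∑ n ∈ Finset.Ico (p ^ (t + 1) + 1) (p ^ (t + 1) + 1 + (p * q) * p ^ t), g n := by
      have hend : p ^ (t + 1) + 1 + (p * q) * p ^ t = p ^ (t + 4) + 1 := by
        have := hC
        omega
      rw [hend, Finset.sum_Ico_eq_sum_range, Finset.sum_Ico_eq_sum_range]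
      have hn : p ^ (t + 4) - p ^ (t + 1) = p ^ (t + 4) + 1 - (p ^ (t + 1) + 1) := by omega
      rw [← hn]
      apply Finset.sum_congr rfl
      intro k _
      congr 1
      omega
    rw [hshift, sum_Ico_periodic_mul (pow_pos hp0 t) hgper]
    congr 1
    -- ∑ r < p^t, g r = A ^ t
    rw [← card_filter_product (P := fun r j => ∀ k < t, r / p ^ k % p + j / p ^ k % p < p)]
    exact pair_count hp0 t
  -- complementary counting
  have htotal : ((((Finset.Ico (p ^ (t + 1)) (p ^ (t + 4))) ×ˢ Finset.range (p ^ t)).filter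
        (fun ij => p ∣ (ij.1 + 1 + ij.2).choose ij.2)).card : ℕ)
      + (p * q) * A ^ t = (p * q) * p ^ t * p ^ t := by
    rw [← hnondvd]
    rw [Finset.card_filter_add_card_filter_not]
    rw [Finset.card_product, Nat.card_Ico, Finset.card_range, hlen]
  -- pass to the reals
  have hAval : (2 : ℝ) * (A : ℝ) = p * (p + 1) := by
    exact_mod_cast congrArg (Nat.cast : ℕ → ℝ) (base_count (p := p))
  rw [hm3]
  rw [show p ^ (t + 4) - p * q * p ^ t = p ^ (t + 1) from by rw [hC, Nat.sub_sub_self hle]]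
  have hcast : ((((Finset.Ico (p ^ (t + 1)) (p ^ (t + 4))) ×ˢ Finset.range (p ^ t)).filter
        (fun ij => p ∣ (ij.1 + 1 + ij.2).choose ij.2)).card : ℝ)
      = (p * q : ℕ) * (p ^ t : ℕ) * (p ^ t : ℕ) - (p * q : ℕ) * (A : ℝ) ^ t := by
    have := congrArg (Nat.cast : ℕ → ℝ) htotal
    push_cast at this ⊢
    linarith
  rw [hcast]
  have hAr : (A : ℝ) = p * (p + 1) / 2 := by linarith
  have hpne : (p : ℝ) ≠ 0 := Nat.cast_ne_zero.mpr (by omega)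
  have h6 : ((p : ℝ) ^ t) * (p : ℝ) ^ t * (((p : ℝ) + 1) / (2 * p)) ^ t
      = ((p : ℝ) * ((p : ℝ) + 1) / 2) ^ t := by
    rw [← mul_pow, ← mul_pow]
    congr 1
    field_simp
  push_cast
  rw [hAr, ← h6]
  ring
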